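/- Let p be an odd prime, set N_p = (p-3)/2, and let k be a natural number with 0 ≤ k ≤ N_p. Then in ℤ/pℤ the following identity holds: ((N_p - k)!)^{-1} = ((N_p + 1)!)^{-1} · (-(4)^{-1})^{k+1} · (2(k+1))! · ((k+1)!)^{-1}, where all the factorials appearing (namely (N_p-k)!, (N_p+1)!, (2k+2)! and (k+1)!, each a product of positive integers less than p) are invertible in ℤ/pℤ and (4)^{-1} denotes the inverse of 4. -/

import Mathlib

private lemma fact_ne_zero_mod (p n : ℕ) (hp : p.Prime) (hn : n < p) :
    ((n.factorial : ZMod p)) ≠ 0 := by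
  rw [Ne, ZMod.natCast_eq_zero_iff]
  rw [hp.dvd_factorial]
  omega

private lemma key_aux (p : ℕ) (hp : p.Prime) (hodd : Odd p) (k : ℕ)
    (hk : k ≤ (p - 3) / 2) :
    (((p - 3) / 2 + 1).factorial : ZMod p) * ((k + 1).factorial : ZMod p) *
        (4 : ZMod p) ^ (k + 1)
      = (-1 : ZMod p) ^ (k + 1) * (((p - 3) / 2 - k).factorial : ZMod p) *
        ((2 * (k + 1)).factorial : ZMod p) := by
  have hp2 : p % 2 = 1 := Nat.odd_iff.mp hodd
  have hp3 : 3 ≤ p := by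
    have := hp.two_le
    omega
  induction k with
  | zero =>
    have h : (((p - 3) / 2 : ℕ) : ZMod p) * 2 + 2 = -1 := by
      have h1 : (2 * ((p - 3) / 2 + 1) : ℕ) = p - 1 := by omega
      have h2 : (((2 * ((p - 3) / 2 + 1) : ℕ)) : ZMod p) = ((p - 1 : ℕ) : ZMod p) := by
        rw [h1]
      rw [Nat.cast_mul, Nat.cast_sub hp.one_le, ZMod.natCast_self] at h2
      push_cast at h2
      linear_combination h2
    simp only [Nat.sub_zero, Nat.factorial_succ, Nat.factorial]
    push_cast
    linear_combination (2 * (((p - 3) / 2).factorial : ZMod p)) * h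
  | succ n ih =>
    have hn : n ≤ (p - 3) / 2 := by omega
    have ih' := ih hn
    have hsub : (p - 3) / 2 - n = ((p - 3) / 2 - (n + 1)) + 1 := by omega
    have h : ((((p - 3) / 2 - (n + 1) : ℕ)) : ZMod p) * 2 = -(2 * (n : ZMod p) + 3) - 2 := by
      have h1 : (2 * (((p - 3) / 2 - (n + 1)) + 1) : ℕ) = p - (2 * n + 3) := by omega
      have h2 : (((2 * (((p - 3) / 2 - (n + 1)) + 1) : ℕ)) : ZMod p)
          = ((p - (2 * n + 3) : ℕ) : ZMod p) := by rw [h1]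
      rw [Nat.cast_mul, Nat.cast_sub (by omega : 2 * n + 3 ≤ p), ZMod.natCast_self] at h2
      push_cast at h2
      linear_combination h2
    rw [hsub, Nat.factorial_succ ((p - 3) / 2 - (n + 1))] at ih'
    rw [show (2 * (n + 1 + 1)) = (2 * (n + 1) + 1) + 1 from by ring,
      Nat.factorial_succ (2 * (n + 1) + 1), Nat.factorial_succ (2 * (n + 1)),
      Nat.factorial_succ (n + 1)]
    push_cast at ih' ⊢
    linear_combination (4 * ((n : ZMod p) + 2)) * ih' +
      (2 * ((n : ZMod p) + 2) * (-1 : ZMod p) ^ (n + 1) *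
        ((((p - 3) / 2 - (n + 1)).factorial : ZMod p)) *
        (((2 * (n + 1)).factorial : ZMod p))) * h

/-- Key factorial identity in `ℤ/pℤ`: for an odd prime `p`, `N_p = (p-3)/2`
and `0 ≤ k ≤ N_p`,
`((N_p - k)!)⁻¹ = ((N_p + 1)!)⁻¹ · (-(4)⁻¹)^{k+1} · (2(k+1))! · ((k+1)!)⁻¹`. -/
theorem factorial_identity_mod_p (p k : ℕ) (hp : p.Prime) (hodd : Odd p)
    (hk : k ≤ (p - 3) / 2) :
    ((((p - 3) / 2 - k).factorial : ZMod p))⁻¹ =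
      ((((p - 3) / 2 + 1).factorial : ZMod p))⁻¹ * (-(4 : ZMod p)⁻¹) ^ (k + 1) *
        (((2 * (k + 1)).factorial : ZMod p)) * (((k + 1).factorial : ZMod p))⁻¹ := by
  have hp2 : p % 2 = 1 := Nat.odd_iff.mp hodd
  have hp3 : 3 ≤ p := by have := hp.two_le; omega
  have h4 : (4 : ZMod p) ≠ 0 := by
    have : ((4 : ℕ) : ZMod p) ≠ 0 := by
      rw [Ne, ZMod.natCast_eq_zero_iff]
      intro hd
      have := Nat.le_of_dvd (by norm_num) hd
      interval_cases p <;> omega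
    simpa using this
  have ha : ((((p - 3) / 2 - k).factorial : ZMod p)) ≠ 0 :=
    fact_ne_zero_mod p _ hp (by omega)
  have hb : ((((p - 3) / 2 + 1).factorial : ZMod p)) ≠ 0 :=
    fact_ne_zero_mod p _ hp (by omega)
  have he : (((k + 1).factorial : ZMod p)) ≠ 0 :=
    fact_ne_zero_mod p _ hp (by omega)
  have key := key_aux p hp hodd k hk
  haveI : Fact p.Prime := ⟨hp⟩
  field_simp
  have h44 : ((4 : ZMod p)⁻¹) ^ (k + 1) * (4 : ZMod p) ^ (k + 1) = 1 := by
    rw [← mul_pow, inv_mul_cancel₀ h4, one_pow]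
  linear_combination ((4 : ZMod p)⁻¹) ^ (k + 1) * key -
    ((((p - 3) / 2 + 1).factorial : ZMod p)) * (((k + 1).factorial : ZMod p)) * h44
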